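/- For every ε > 0 there exists n₀ such that for all n ≥ n₀ and every integer j with 1 ≤ j ≤ n^{1/5}, the critical Erdős–Rényi random graph G(n,1/n) satisfies P( C(1) contains a cycle | |C(1)| = j ) ≤ ε. -/

import Mathlib

open MeasureTheory Filter
open scoped ENNReal

/-- The Erdős–Rényi `G(n, 1/n)` measure on edge configurations of `K_n`:
each potential edge is retained (`true`) independently with probability `1/n`. -/
noncomputable def erMeasure (n : ℕ) : Measure (Sym2 (Fin n) → Bool) :=
  Measure.pi fun _ => (PMF.bernoulli (min (n : ℝ≥0∞)⁻¹ 1).toNNReal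
    (by simpa using ENNReal.toNNReal_mono ENNReal.one_ne_top (min_le_right (n : ℝ≥0∞)⁻¹ 1))).toMeasure

instance (n : ℕ) : IsProbabilityMeasure (erMeasure n) := by
  unfold erMeasure; infer_instance

/-- The simple graph on `Fin n` determined by an edge configuration. -/
def graphOf {n : ℕ} (ω : Sym2 (Fin n) → Bool) : SimpleGraph (Fin n) where
  Adj u v := u ≠ v ∧ ω s(u, v) = true
  symm := by
    refine ⟨?_⟩
    intro u v h
    exact ⟨Ne.symm h.1, by rw [Sym2.eq_swap]; exact h.2⟩
  loopless := by
    refine ⟨?_⟩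
    intro u h
    exact h.1 rfl

/-- Size of the connected component of `v`. -/
noncomputable def compSize {n : ℕ} (G : SimpleGraph (Fin n)) (v : Fin n) : ℕ :=
  Nat.card {w : Fin n | G.Reachable v w}

/-- Diameter of a finite graph: maximal distance between two vertices. -/
noncomputable def gdiam {n : ℕ} (G : SimpleGraph (Fin n)) : ℕ :=
  Finset.univ.sup fun p : Fin n × Fin n => G.dist p.1 p.2

open scoped Classical in
/-- Diameter of the connected component of `x`. -/
noncomputable def compDiam {n : ℕ} (G : SimpleGraph (Fin n)) (x : Fin n) : ℕ :=
  Finset.univ.sup fun p : Fin n × Fin n =>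
    if G.Reachable x p.1 ∧ G.Reachable x p.2 then G.dist p.1 p.2 else 0

/-- Product of the weights of the edges of `T`. -/
noncomputable def treeWeight {n : ℕ} (w : Sym2 (Fin n) → ℝ) (T : SimpleGraph (Fin n)) : ℝ :=
  letI : Fintype T.edgeSet := Fintype.ofFinite _
  ∏ e ∈ T.edgeSet.toFinset, w e

open scoped Classical in
/-- Probability that the `w`-weighted uniform spanning tree of `K_n` lies in `E`. -/
noncomputable def ustProb {n : ℕ} (w : Sym2 (Fin n) → ℝ) (E : Set (SimpleGraph (Fin n))) : ℝ :=
  (∑ T ∈ Finset.univ.filter (fun T : SimpleGraph (Fin n) => T.IsTree ∧ T ∈ E), treeWeight w T) /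
    (∑ T ∈ Finset.univ.filter (fun T : SimpleGraph (Fin n) => T.IsTree), treeWeight w T)

/-- The random weights: heavy edges get weight `n^(1+γ)`, the others weight `1`. -/
noncomputable def weightFn (n : ℕ) (γ : ℝ) (ω : Sym2 (Fin n) → Bool) (e : Sym2 (Fin n)) : ℝ :=
  if ω e then (n : ℝ) ^ ((1 : ℝ) + γ) else 1

/-- The connected component of `v`, viewed as a subgraph (the induced subgraph on the
vertices reachable from `v`), contains a cycle, i.e. it is not a tree. -/
def compHasCycle {n : ℕ} (G : SimpleGraph (Fin n)) (v : Fin n) : Prop :=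
  ¬ (G.induce {w | G.Reachable v w}).IsAcyclic

lemma meas_all {n : ℕ} (s : Set (Sym2 (Fin n) → Bool)) : MeasurableSet s :=
  (Set.toFinite s).measurableSet

lemma erMeasure_singleton {n : ℕ} (ω : Sym2 (Fin n) → Bool) :
    erMeasure n {ω} = ∏ e : Sym2 (Fin n),
      (if ω e then min (n : ℝ≥0∞)⁻¹ 1 else 1 - min (n : ℝ≥0∞)⁻¹ 1) := by
  rw [← Set.univ_pi_singleton ω]
  rw [erMeasure, Measure.pi_pi]
  refine Finset.prod_congr rfl fun e _ => ?_
  rw [PMF.toMeasure_apply_singleton _ _ (measurableSet_singleton _)]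
  refine (PMF.bernoulli_apply _ _).trans ?_
  have hne : min (n : ℝ≥0∞)⁻¹ 1 ≠ ⊤ := ne_top_of_le_ne_top ENNReal.one_ne_top (min_le_right _ _)
  cases h : ω e <;> simp [h, ENNReal.coe_toNNReal hne]

lemma erMeasure_apply {n : ℕ} (s : Set (Sym2 (Fin n) → Bool)) :
    erMeasure n s = ∑ ω ∈ (Set.toFinite s).toFinset, erMeasure n {ω} := by
  classical
  have hs : s = ⋃ ω ∈ (Set.toFinite s).toFinset, {ω} := by
    ext x
    rw [Set.mem_iUnion₂]
    constructor
    · intro hx; exact ⟨x, by simpa using hx, rfl⟩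
    · rintro ⟨y, hy, rfl⟩; simpa using hy
  conv_lhs => rw [hs]
  rw [measure_biUnion_finset]
  · intro x _ y _ hxy
    simp [Function.onFun, Set.disjoint_singleton, hxy]
  · intro ω _; exact measurableSet_singleton _

lemma flip_weight {n : ℕ} (ω : Sym2 (Fin n) → Bool) (e : Sym2 (Fin n)) (he : ω e = true) :
    erMeasure n {ω} * (1 - min (n : ℝ≥0∞)⁻¹ 1)
      = erMeasure n {Function.update ω e false} * min (n : ℝ≥0∞)⁻¹ 1 := by
  classical
  set p := min (n : ℝ≥0∞)⁻¹ 1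
  rw [erMeasure_singleton, erMeasure_singleton]
  rw [← Finset.mul_prod_erase Finset.univ _ (Finset.mem_univ e),
      ← Finset.mul_prod_erase Finset.univ
        (fun x => if Function.update ω e false x then p else 1 - p) (Finset.mem_univ e)]
  have h1 : (Finset.univ.erase e).prod
      (fun x => if Function.update ω e false x then p else 1 - p)
      = (Finset.univ.erase e).prod (fun x => if ω x then p else 1 - p) := by
    refine Finset.prod_congr rfl fun x hx => ?_
    rw [Function.update_apply, if_neg (Finset.mem_erase.mp hx).1]
  rw [h1, he, Function.update_self]
  simp only [if_true, Bool.false_eq_true, if_false]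
  ring

lemma reachable_of_adj_reachable {V : Type*} {G H : SimpleGraph V}
    (h : ∀ x y, G.Adj x y → H.Reachable x y) {x y : V} (hr : G.Reachable x y) :
    H.Reachable x y := by
  obtain ⟨w⟩ := hr
  induction w with
  | nil => exact SimpleGraph.Reachable.refl _
  | cons ha _ ih => exact (h _ _ ha).trans ih

lemma exists_good_edge {n : ℕ} (v : Fin n) (ω : Sym2 (Fin n) → Bool)
    (hcyc : compHasCycle (graphOf ω) v) :
    ∃ e : Sym2 (Fin n), ω e = true ∧
      {w | (graphOf (Function.update ω e false)).Reachable v w}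
        = {w | (graphOf ω).Reachable v w} ∧
      ∀ x ∈ e, (graphOf ω).Reachable v x := by
  classical
  set G := graphOf ω with hG
  set C : Set (Fin n) := {w | G.Reachable v w} with hC
  set G' := G.induce C with hG'
  rw [compHasCycle, SimpleGraph.isAcyclic_iff_forall_adj_isBridge] at hcyc
  push_neg at hcyc
  obtain ⟨a, b, hadj, hbr⟩ := hcyc
  rw [SimpleGraph.isBridge_iff] at hbr
  have hreach' : (G' \ SimpleGraph.fromEdgeSet {s(a, b)}).Reachable a b := by
    by_contra h; exact hbr h
  have hGadj : G.Adj a.1 b.1 := hadj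
  set e : Sym2 (Fin n) := s(a.1, b.1) with he
  have hωe : ω e = true := hGadj.2
  set H := graphOf (Function.update ω e false) with hH
  -- H.Adj for non-e edges
  have hHadj : ∀ x y : Fin n, x ≠ y → s(x, y) ≠ e → ω s(x, y) = true → H.Adj x y := by
    intro x y hxy hne hω
    exact ⟨hxy, by rwa [Function.update_apply, if_neg hne]⟩
  have hHG : ∀ x y : Fin n, H.Adj x y → G.Adj x y := by
    intro x y ⟨hxy, hupd⟩
    refine ⟨hxy, ?_⟩
    by_cases hc : s(x, y) = e
    · rw [hc, Function.update_self] at hupd; exact absurd hupd (by simp)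
    · rwa [Function.update_apply, if_neg hc] at hupd
  -- H.Reachable a b
  have hab : H.Reachable a.1 b.1 := by
    have hmaprel : ∀ {x y : ↥C}, (G' \ SimpleGraph.fromEdgeSet {s(a, b)}).Adj x y →
        H.Adj x.1 y.1 := by
      rintro x y ⟨hxy, hnotin⟩
      have hne : s(x.1, y.1) ≠ e := by
        intro hcontra
        apply hnotin
        have h1 : Sym2.map Subtype.val s(x, y) = Sym2.map Subtype.val s(a, b) := by
          rw [Sym2.map_pair_eq, Sym2.map_pair_eq]; exact hcontra
        have h2 := Sym2.map.injective Subtype.val_injective h1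
        simp only [SimpleGraph.fromEdgeSet_adj]
        exact ⟨by simp [h2], (hxy : G'.Adj x y).ne⟩
      exact hHadj x.1 y.1 (fun hc => (hxy : G'.Adj x y).ne (Subtype.val_injective hc))
        hne (hxy : G'.Adj x y).2
    exact hreach'.map ⟨Subtype.val, hmaprel⟩
  -- forward
  have hGH : ∀ x y : Fin n, G.Adj x y → H.Reachable x y := by
    intro x y hxy
    by_cases hc : s(x, y) = e
    · rw [he, Sym2.eq_iff] at hc
      rcases hc with ⟨rfl, rfl⟩ | ⟨rfl, rfl⟩
      · exact hab
      · exact hab.symm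
    · exact (hHadj x y hxy.1 hc hxy.2).reachable
  have hsets : {w | H.Reachable v w} = C := by
    ext w
    constructor
    · intro hw; exact reachable_of_adj_reachable (fun x y h => (hHG x y h).reachable) hw
    · intro hw; exact reachable_of_adj_reachable hGH hw
  exact ⟨e, hωe, hsets, fun x hx => by
    rw [he, Sym2.mem_iff] at hx
    rcases hx with rfl | rfl
    · exact a.2
    · exact b.2⟩

-- card of edges with endpoints in a j-element reachability set
lemma card_edges_le {n : ℕ} (G : SimpleGraph (Fin n)) (v : Fin n) (j : ℕ)
    (hj : compSize G v = j) :
    ((Set.toFinite {e : Sym2 (Fin n) | ∀ x ∈ e, G.Reachable v x}).toFinset).card ≤ j * j := by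
  classical
  set C : Finset (Fin n) := Finset.univ.filter fun w => G.Reachable v w with hC
  have hCcard : C.card = j := by
    rw [← hj, compSize, Nat.card_eq_fintype_card]
    simp [hC, ← Fintype.card_subtype]
  have h2 : ((Set.toFinite {e : Sym2 (Fin n) | ∀ x ∈ e, G.Reachable v x}).toFinset).card
      ≤ (C ×ˢ C).card := by
    apply Finset.card_le_card_of_injOn (fun e => (e.out.1, e.out.2))
    · intro e he
      simp only [Finset.mem_coe, Set.Finite.mem_toFinset, Set.mem_setOf_eq] at he
      simp only [Finset.mem_coe, Finset.mem_product, hC, Finset.mem_filter, Finset.mem_univ, true_and]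
      exact ⟨he _ (Sym2.out_fst_mem e), he _ (Sym2.out_snd_mem e)⟩
    · intro e₁ _ e₂ _ h
      have h' : e₁.out = e₂.out := Prod.ext (congrArg Prod.fst h) (congrArg Prod.snd h)
      rw [← Quot.out_eq e₁, ← Quot.out_eq e₂, h']
  exact h2.trans (le_of_eq (by rw [Finset.card_product, hCcard]))

lemma main_bound {n : ℕ} (v : Fin n) (j : ℕ) :
    erMeasure n ({ω | compSize (graphOf ω) v = j} ∩ {ω | compHasCycle (graphOf ω) v})
        * (1 - min (n : ℝ≥0∞)⁻¹ 1)
      ≤ (j * j : ℕ) * (min (n : ℝ≥0∞)⁻¹ 1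
          * erMeasure n {ω | compSize (graphOf ω) v = j}) := by
  classical
  set p := min (n : ℝ≥0∞)⁻¹ 1 with hp
  set S := {ω : Sym2 (Fin n) → Bool | compSize (graphOf ω) v = j} with hS
  set A := S ∩ {ω | compHasCycle (graphOf ω) v} with hA
  have hEx : ∀ ω : Sym2 (Fin n) → Bool, ∃ e : Sym2 (Fin n),
      ω ∈ A → (ω e = true ∧
        {w | (graphOf (Function.update ω e false)).Reachable v w}
          = {w | (graphOf ω).Reachable v w} ∧
        ∀ x ∈ e, (graphOf ω).Reachable v x) := by
    intro ω
    by_cases h : ω ∈ A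
    · obtain ⟨e, h1, h2, h3⟩ := exists_good_edge v ω h.2
      exact ⟨e, fun _ => ⟨h1, h2, h3⟩⟩
    · exact ⟨s(v, v), fun hc => absurd hc h⟩
  choose E hE using hEx
  set f : (Sym2 (Fin n) → Bool) → (Sym2 (Fin n) → Bool) :=
    fun ω => Function.update ω (E ω) false with hf
  set FA := (Set.toFinite A).toFinset with hFA
  set FS := (Set.toFinite S).toFinset with hFS
  have hsize : ∀ ω ∈ A, compSize (graphOf (f ω)) v = j := by
    intro ω hω
    rw [compSize, hf]
    show Nat.card {w | (graphOf (Function.update ω (E ω) false)).Reachable v w} = j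
    rw [(hE ω hω).2.1]
    exact hω.1
  have hrec : ∀ ω ∈ A, Function.update (f ω) (E ω) true = ω := by
    intro ω hω
    funext x
    by_cases hx : x = E ω
    · subst hx; rw [Function.update_self]; exact ((hE ω hω).1).symm
    · rw [Function.update_of_ne hx]
      show Function.update ω (E ω) false x = ω x
      rw [Function.update_of_ne hx]
  have step1 : erMeasure n A * (1 - p) = (∑ ω ∈ FA, erMeasure n {f ω}) * p := by
    rw [erMeasure_apply A, Finset.sum_mul, Finset.sum_mul]
    refine Finset.sum_congr rfl fun ω hω => ?_
    exact flip_weight ω (E ω) ((hE ω ((Set.Finite.mem_toFinset _).mp hω)).1)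
  have hfiber : ∀ ω' ∈ FA.image f, (FA.filter fun ω => f ω = ω').card ≤ j * j := by
    intro ω' hω'
    obtain ⟨ω₀, hω₀, rfl⟩ := Finset.mem_image.mp hω'
    have hω₀A : ω₀ ∈ A := (Set.Finite.mem_toFinset _).mp hω₀
    refine le_trans (Finset.card_le_card_of_injOn (fun ω => E ω) ?_ ?_)
      (card_edges_le (graphOf (f ω₀)) v j (hsize ω₀ hω₀A))
    · intro ω hω
      rw [Finset.mem_coe, Finset.mem_filter] at hω
      obtain ⟨hωFA, hfω⟩ := hω
      have hωA : ω ∈ A := (Set.Finite.mem_toFinset _).mp hωFA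
      obtain ⟨h1, h2, h3⟩ := hE ω hωA
      rw [Finset.mem_coe, Set.Finite.mem_toFinset]
      intro x hx
      have hx1 : x ∈ {w | (graphOf (f ω)).Reachable v w} := by
        rw [hf]
        show x ∈ {w | (graphOf (Function.update ω (E ω) false)).Reachable v w}
        rw [h2]
        exact h3 x hx
      rw [← hfω]
      exact hx1
    · intro ω₁ hω₁ ω₂ hω₂ hEeq
      simp only [Finset.coe_filter, Set.mem_setOf_eq] at hω₁ hω₂
      have hA₁ : ω₁ ∈ A := (Set.Finite.mem_toFinset _).mp hω₁.1
      have hA₂ : ω₂ ∈ A := (Set.Finite.mem_toFinset _).mp hω₂.1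
      have hEeq' : E ω₁ = E ω₂ := hEeq
      rw [← hrec ω₁ hA₁, ← hrec ω₂ hA₂, hEeq', hω₁.2, hω₂.2]
  have step2 : (∑ ω ∈ FA, erMeasure n {f ω})
      ≤ (j * j : ℕ) * ∑ ω' ∈ FS, erMeasure n {ω'} := by
    rw [Finset.sum_comp (fun ω' => erMeasure n {ω'}) f]
    have hsub : FA.image f ⊆ FS := by
      intro ω' hω'
      obtain ⟨ω₀, hω₀, rfl⟩ := Finset.mem_image.mp hω'
      rw [Set.Finite.mem_toFinset]
      exact hsize ω₀ ((Set.Finite.mem_toFinset _).mp hω₀)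
    calc ∑ ω' ∈ FA.image f, (FA.filter fun ω => f ω = ω').card • erMeasure n {ω'}
        ≤ ∑ ω' ∈ FA.image f, (j * j : ℕ) • erMeasure n {ω'} := by
          refine Finset.sum_le_sum fun ω' h => ?_
          rw [nsmul_eq_mul, nsmul_eq_mul]
          exact mul_le_mul_left (by exact_mod_cast Nat.cast_le.mpr (hfiber ω' h)) _
      _ = (j * j : ℕ) * ∑ ω' ∈ FA.image f, erMeasure n {ω'} := by
          rw [Finset.mul_sum]; exact Finset.sum_congr rfl fun _ _ => nsmul_eq_mul _ _
      _ ≤ (j * j : ℕ) * ∑ ω' ∈ FS, erMeasure n {ω'} := by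
          exact mul_le_mul_right (Finset.sum_le_sum_of_subset hsub) _
  calc erMeasure n A * (1 - p) = (∑ ω ∈ FA, erMeasure n {f ω}) * p := step1
    _ ≤ ((j * j : ℕ) * ∑ ω' ∈ FS, erMeasure n {ω'}) * p := mul_le_mul_left step2 _
    _ = (j * j : ℕ) * (p * erMeasure n S) := by rw [erMeasure_apply S]; ring

lemma numeric_n0 (ε : ℝ) (hε : 0 < ε) :
    ∃ n₀ : ℕ, 2 ≤ n₀ ∧ ∀ n ≥ n₀, 2 * (n : ℝ) ^ (-(3:ℝ)/5) ≤ ε := by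
  have h1 : Tendsto (fun n : ℕ => 2 * (n : ℝ) ^ (-(3:ℝ)/5)) atTop (nhds (2 * 0)) := by
    have h2 : Tendsto (fun x : ℝ => x ^ (-(3/5 : ℝ))) atTop (nhds 0) :=
      tendsto_rpow_neg_atTop (by norm_num)
    have h3 := h2.comp (tendsto_natCast_atTop_atTop (R := ℝ))
    simpa [Function.comp, neg_div] using h3.const_mul 2
  rw [mul_zero] at h1
  obtain ⟨n₁, hn₁⟩ := (h1.eventually_le_const hε).exists_forall_of_atTop
  exact ⟨max n₁ 2, le_max_right _ _,
    fun n hn => hn₁ n (le_trans (le_max_left _ _) hn)⟩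

/-- For every `ε > 0` there is `n₀` such that for all `n ≥ n₀` and every
integer `j` with `1 ≤ j ≤ n^{1/5}`, in `G(n, 1/n)` the conditional probability that the
component of the first vertex contains a cycle, given that it has exactly `j` vertices,
is at most `ε`. -/
theorem component_cycle_conditional (ε : ℝ) (hε : 0 < ε) :
    ∃ n₀ : ℕ, ∀ n ≥ n₀, ∀ hn : 0 < n, ∀ j : ℕ, 1 ≤ j → (j : ℝ) ≤ (n : ℝ) ^ ((1 : ℝ) / 5) →
      (ProbabilityTheory.cond (erMeasure n) {ω | compSize (graphOf ω) ⟨0, hn⟩ = j}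
        {ω | compHasCycle (graphOf ω) ⟨0, hn⟩}).toReal ≤ ε := by
  obtain ⟨n₀, hn₀2, hn₀⟩ := numeric_n0 ε hε
  refine ⟨n₀, fun n hn hn0 j hj1 hjn => ?_⟩
  have hn2 : 2 ≤ n := le_trans hn₀2 hn
  set v : Fin n := ⟨0, hn0⟩
  set S := {ω : Sym2 (Fin n) → Bool | compSize (graphOf ω) v = j} with hSdef
  set T := {ω : Sym2 (Fin n) → Bool | compHasCycle (graphOf ω) v} with hTdef
  set μ := erMeasure n with hμ
  have hnR : (2 : ℝ) ≤ (n : ℝ) := by exact_mod_cast hn2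
  have hnpos : (0 : ℝ) < (n : ℝ) := by linarith
  rw [ProbabilityTheory.cond_apply (meas_all S) μ T]
  set p := min (n : ℝ≥0∞)⁻¹ 1 with hpdef
  have hp : p = (n : ℝ≥0∞)⁻¹ := min_eq_left (ENNReal.inv_le_one.mpr (by
    exact_mod_cast Nat.one_le_cast.mpr (by omega)))
  by_cases h0 : μ S = 0
  · have : μ (S ∩ T) = 0 := measure_mono_null Set.inter_subset_left h0
    rw [this, mul_zero]
    simpa using hε.le
  · have hS1 : μ S ≠ ⊤ := measure_ne_top _ _
    have hmb := main_bound v j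
    have h2 : (2 : ℝ≥0∞)⁻¹ ≤ 1 - p := by
      have hinv : (n : ℝ≥0∞)⁻¹ ≤ 2⁻¹ := by
        apply ENNReal.inv_le_inv' ?_
        exact_mod_cast Nat.cast_le.mpr hn2
      calc (2 : ℝ≥0∞)⁻¹ = 1 - 2⁻¹ := by
            rw [ENNReal.one_sub_inv_two]
        _ ≤ 1 - p := by rw [hp]; exact tsub_le_tsub_left hinv 1
    have h4 : μ (S ∩ T) * 2⁻¹ ≤ (j * j : ℕ) * (p * μ S) :=
      le_trans (mul_le_mul_right h2 _) hmb
    have h3 : μ (S ∩ T) ≤ 2 * ((j * j : ℕ) * (p * μ S)) := by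
      calc μ (S ∩ T) = μ (S ∩ T) * 2⁻¹ * 2 := by
            rw [mul_assoc, ENNReal.inv_mul_cancel (by norm_num) (by norm_num), mul_one]
        _ ≤ ((j * j : ℕ) * (p * μ S)) * 2 := mul_le_mul_left h4 _
        _ = 2 * ((j * j : ℕ) * (p * μ S)) := mul_comm _ _
    have h6 : (μ S)⁻¹ * μ (S ∩ T) ≤ 2 * (j * j : ℕ) * p := by
      refine le_trans (mul_le_mul_right h3 _) ?_
      have heq : (μ S)⁻¹ * (2 * ((j * j : ℕ) * (p * μ S)))
          = (2 * (j * j : ℕ) * p) * ((μ S)⁻¹ * μ S) := by ring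
      rw [heq, ENNReal.inv_mul_cancel h0 hS1, mul_one]
    have hc_ne : (2 * (j * j : ℕ) * p : ℝ≥0∞) ≠ ⊤ := by
      rw [hp]
      exact ENNReal.mul_ne_top (ENNReal.mul_ne_top (by norm_num) (ENNReal.natCast_ne_top _))
        (ENNReal.inv_ne_top.mpr (by exact_mod_cast Nat.cast_ne_zero.mpr (by omega)))
    refine le_trans (ENNReal.toReal_mono hc_ne h6) ?_
    have hcr : (2 * (j * j : ℕ) * p : ℝ≥0∞).toReal = 2 * (j : ℝ) * (j : ℝ) * (n : ℝ)⁻¹ := by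
      rw [hp, ENNReal.toReal_mul, ENNReal.toReal_mul, ENNReal.toReal_inv, ENNReal.toReal_ofNat,
        ENNReal.toReal_natCast, ENNReal.toReal_natCast]
      push_cast
      ring
    rw [hcr]
    -- real estimate
    have hj2 : (j : ℝ) * (j : ℝ) ≤ (n : ℝ) ^ ((2 : ℝ) / 5) := by
      have h5 : (n : ℝ) ^ ((1 : ℝ) / 5) * (n : ℝ) ^ ((1 : ℝ) / 5) = (n : ℝ) ^ ((2 : ℝ) / 5) := by
        rw [← Real.rpow_add hnpos]; norm_num
      have hj0 : (0 : ℝ) ≤ (j : ℝ) := Nat.cast_nonneg _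
      calc (j : ℝ) * (j : ℝ) ≤ (n : ℝ) ^ ((1 : ℝ) / 5) * (n : ℝ) ^ ((1 : ℝ) / 5) :=
            mul_le_mul hjn hjn hj0 (le_trans hj0 hjn)
        _ = _ := h5
    calc 2 * (j : ℝ) * (j : ℝ) * (n : ℝ)⁻¹ ≤ 2 * (n : ℝ) ^ ((2 : ℝ) / 5) * (n : ℝ)⁻¹ := by
          apply mul_le_mul_of_nonneg_right _ (by positivity)
          rw [mul_assoc]
          exact mul_le_mul_of_nonneg_left hj2 (by norm_num)
      _ = 2 * (n : ℝ) ^ (-(3:ℝ)/5) := by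
          rw [← Real.rpow_neg_one (n : ℝ), mul_assoc, ← Real.rpow_add hnpos]
          norm_num
      _ ≤ ε := hn₀ n hn
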